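/- Any nontrivial continuous lump solution decays at most quadratically: let α > 4/5 and let φ ∈ X_{α/2} be a lump solution of the (rescaled) steady fKP-I equation that agrees almost everywhere with a continuous function φ̃ : ℝ² → ℝ. If there exist δ > 2 and C > 0 with |φ̃(x,y)| ≤ C·(1 + x² + y²)^{−δ/2} for all (x,y) ∈ ℝ², then φ = 0 almost everywhere. -/

import Mathlib

open MeasureTheory Filter Complex
open scoped Topology

noncomputable section

/-- The Fourier transform on `ℝ²` with kernel `e^{-2πi x·ξ}` (Bochner integral). -/
def FT2 (f : ℝ × ℝ → ℂ) (ξ : ℝ × ℝ) : ℂ :=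
  ∫ x : ℝ × ℝ, Complex.exp (-(2 * Real.pi * Complex.I) * ((x.1 * ξ.1 + x.2 * ξ.2 : ℝ) : ℂ)) * f x

/-- `HasFT2 f F` means `f, F ∈ L²(ℝ²)` and `F` is the Fourier–Plancherel transform of `f`,
characterized by the Parseval relation tested against Schwartz functions. -/
def HasFT2 (f F : ℝ × ℝ → ℂ) : Prop :=
  MemLp f 2 (volume : Measure (ℝ × ℝ)) ∧ MemLp F 2 (volume : Measure (ℝ × ℝ)) ∧
    ∀ ψ : SchwartzMap (ℝ × ℝ) ℂ, ∫ ξ, F ξ * ψ ξ = ∫ x, f x * FT2 (fun y => ψ y) x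

/-- `IsEnergyTriple α φ g h`: `φ` is a real-valued `L²` function on `ℝ²` belonging to the
energy space `X_{α/2}`, with `g = D_x^{α/2} φ` and `h = ∂_x⁻¹ ∂_y φ`, i.e. `g, h ∈ L²` and
their Fourier–Plancherel transforms satisfy `ĝ(ξ) = |ξ₁|^{α/2} φ̂(ξ)` and
`ĥ(ξ) = (ξ₂/ξ₁) φ̂(ξ)` almost everywhere. -/
def IsEnergyTriple (α : ℝ) (φ g h : ℝ × ℝ → ℝ) : Prop :=
  ∃ Φ G H : ℝ × ℝ → ℂ,
    HasFT2 (fun x => (φ x : ℂ)) Φ ∧ HasFT2 (fun x => (g x : ℂ)) G ∧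
      HasFT2 (fun x => (h x : ℂ)) H ∧
      (∀ᵐ ξ : ℝ × ℝ ∂volume, G ξ = ((|ξ.1| ^ (α / 2) : ℝ) : ℂ) * Φ ξ) ∧
      (∀ᵐ ξ : ℝ × ℝ ∂volume, H ξ = ((ξ.2 / ξ.1 : ℝ) : ℂ) * Φ ξ)

/-- Membership in the energy space `X_{α/2}`. -/
def MemX (α : ℝ) (φ : ℝ × ℝ → ℝ) : Prop := ∃ g h, IsEnergyTriple α φ g h

/-- A lump solution of the (rescaled) steady fKP-I equation: `φ ∈ X_{α/2}` and
`(1 + |ξ₁|^α + ξ₂²/ξ₁²) φ̂(ξ) = (1/2) (φ²)^(ξ)` for a.e. `ξ` with `ξ₁ ≠ 0`. -/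
def IsLump (α : ℝ) (φ : ℝ × ℝ → ℝ) : Prop :=
  MemX α φ ∧
    ∃ Φ : ℝ × ℝ → ℂ, HasFT2 (fun x => (φ x : ℂ)) Φ ∧
      ∀ᵐ ξ : ℝ × ℝ ∂volume, ξ.1 ≠ 0 →
        ((1 + |ξ.1| ^ α + ξ.2 ^ 2 / ξ.1 ^ 2 : ℝ) : ℂ) * Φ ξ
          = (1 / 2) * FT2 (fun x => ((φ x ^ 2 : ℝ) : ℂ)) ξ

/-! ### Auxiliary material -/

open scoped ContDiff

/-- The standard bilinear pairing on `ℝ²`. -/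
def LB : (ℝ × ℝ) →ₗ[ℝ] (ℝ × ℝ) →ₗ[ℝ] ℝ :=
  LinearMap.mk₂ ℝ (fun x ξ => x.1 * ξ.1 + x.2 * ξ.2)
    (fun m₁ m₂ n => by simp; ring) (fun c m n => by simp; ring)
    (fun m n₁ n₂ => by simp; ring) (fun c m n => by simp; ring)

lemma LB_apply (x ξ : ℝ × ℝ) : LB x ξ = x.1 * ξ.1 + x.2 * ξ.2 := rfl

lemma LB_cont : Continuous fun p : (ℝ × ℝ) × (ℝ × ℝ) => LB p.1 p.2 := by
  simp only [LB_apply]; fun_prop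

lemma LB_flip : LB.flip = LB := by
  apply LinearMap.ext; intro x; apply LinearMap.ext; intro ξ
  simp only [LB_apply, LinearMap.flip_apply]; ring

lemma FT2_eq (f : ℝ × ℝ → ℂ) :
    FT2 f = VectorFourier.fourierIntegral Real.fourierChar volume LB f := by
  funext ξ
  unfold FT2 VectorFourier.fourierIntegral
  congr 1; funext x
  rw [Circle.smul_def, Real.fourierChar_apply]
  congr 1
  rw [LB_apply]
  push_cast
  ring_nf

lemma FT2_continuous {f : ℝ × ℝ → ℂ} (hf : Integrable f volume) : Continuous (FT2 f) := by
  rw [FT2_eq]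
  exact VectorFourier.fourierIntegral_continuous Real.continuous_fourierChar LB_cont hf

lemma FT2_mult {f g : ℝ × ℝ → ℂ} (hf : Integrable f volume) (hg : Integrable g volume) :
    ∫ ξ, FT2 f ξ * g ξ = ∫ x, f x * FT2 g x := by
  have := VectorFourier.integral_fourierIntegral_smul_eq_flip (F := ℂ)
    (μ := (volume : Measure (ℝ × ℝ))) (ν := (volume : Measure (ℝ × ℝ))) (L := LB)
    Real.continuous_fourierChar LB_cont hf hg
  rw [LB_flip] at this
  simpa [FT2_eq, smul_eq_mul] using this

/-- Smooth compactly supported real functions give Schwartz maps into ℂ. -/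
def toSchwartz (g : ℝ × ℝ → ℝ) (hg : ContDiff ℝ ∞ g) (hsupp : HasCompactSupport g) :
    SchwartzMap (ℝ × ℝ) ℂ where
  toFun x := (g x : ℂ)
  smooth' := Complex.ofRealCLM.contDiff.comp hg
  decay' := by
    intro k n
    have hnorm : ∀ x : ℝ × ℝ, ‖iteratedFDeriv ℝ n (fun y => (g y : ℂ)) x‖
        = ‖iteratedFDeriv ℝ n g x‖ := fun x =>
      Complex.ofRealLI.norm_iteratedFDeriv_comp_left (x := x) hg.contDiffAt (mod_cast le_top)
    have hc : Continuous fun x : ℝ × ℝ => ‖x‖ ^ k * ‖iteratedFDeriv ℝ n g x‖ := by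
      exact ((continuous_norm.pow k).mul
        ((hg.continuous_iteratedFDeriv (mod_cast le_top)).norm))
    have hcs : HasCompactSupport fun x : ℝ × ℝ => ‖x‖ ^ k * ‖iteratedFDeriv ℝ n g x‖ :=
      ((hsupp.iteratedFDeriv n).norm).mul_left
    obtain ⟨M, hM⟩ := (hc.bddAbove_range_of_hasCompactSupport hcs).imp fun M hM => hM
    exact ⟨M, fun x => by rw [hnorm]; exact hM (Set.mem_range_self x)⟩

@[simp] lemma toSchwartz_apply (g : ℝ × ℝ → ℝ) (hg : ContDiff ℝ ∞ g)
    (hsupp : HasCompactSupport g) (x : ℝ × ℝ) : toSchwartz g hg hsupp x = (g x : ℂ) := rfl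

/-- **At most quadratic decay** (Remark 1.3): if a lump solution of the (rescaled) steady
fKP-I equation agrees a.e. with a continuous function decaying faster than quadratically at
infinity, then it vanishes identically (a.e.). -/
theorem lump_decays_at_most_quadratically (α : ℝ) (hα : 4 / 5 < α) (φ : ℝ × ℝ → ℝ)
    (hφ : IsLump α φ) (φt : ℝ × ℝ → ℝ) (hcont : Continuous φt)
    (hae : ∀ᵐ p : ℝ × ℝ ∂volume, φ p = φt p) (δ C : ℝ) (hδ : 2 < δ) (hC : 0 < C)
    (hdec : ∀ p : ℝ × ℝ, |φt p| ≤ C * (1 + p.1 ^ 2 + p.2 ^ 2) ^ (-(δ / 2))) :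
    ∀ᵐ p : ℝ × ℝ ∂volume, φ p = 0 := by
  have hα0 : (0 : ℝ) < α := by linarith
  obtain ⟨-, Φ, ⟨hΦf2, hΦ2, hPar⟩, hEq⟩ := hφ
  -- integrability from the decay assumption
  have hfinrank : (Module.finrank ℝ (ℝ × ℝ) : ℝ) < δ := by
    simp only [Module.finrank_prod, Module.finrank_self]
    norm_num
    linarith
  have hmaj : Integrable (fun p : ℝ × ℝ => C * ((1 : ℝ) + ‖p‖ ^ 2) ^ (-δ / 2)) volume :=
    (integrable_rpow_neg_one_add_norm_sq hfinrank).const_mul C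
  have hbound : ∀ p : ℝ × ℝ, |φt p| ≤ C * ((1 : ℝ) + ‖p‖ ^ 2) ^ (-δ / 2) := by
    intro p
    refine (hdec p).trans ?_
    have h1 : (0 : ℝ) < 1 + ‖p‖ ^ 2 := by positivity
    have h2 : 1 + ‖p‖ ^ 2 ≤ 1 + p.1 ^ 2 + p.2 ^ 2 := by
      have : ‖p‖ ^ 2 ≤ p.1 ^ 2 + p.2 ^ 2 := by
        rcases le_total ‖p.1‖ ‖p.2‖ with h | h
        · rw [Prod.norm_def, max_eq_right h, Real.norm_eq_abs, _root_.sq_abs]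
          nlinarith [sq_nonneg p.1]
        · rw [Prod.norm_def, max_eq_left h, Real.norm_eq_abs, _root_.sq_abs]
          nlinarith [sq_nonneg p.2]
      linarith
    have h3 := Real.rpow_le_rpow_of_nonpos h1 h2 (by linarith : -(δ / 2) ≤ 0)
    rw [neg_div]
    exact mul_le_mul_of_nonneg_left h3 hC.le
  have hφt_int : Integrable φt volume :=
    hmaj.mono' hcont.aestronglyMeasurable
      (ae_of_all _ fun p => by rw [Real.norm_eq_abs]; exact hbound p)
  have hφ_int : Integrable φ volume := hφt_int.congr (Filter.EventuallyEq.symm hae)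
  have hfC_int : Integrable (fun x => (φ x : ℂ)) volume := hφ_int.ofReal
  -- integrability of φ²
  have hφt_le : ∀ p, |φt p| ≤ C := by
    intro p
    refine (hbound p).trans ?_
    have h1 : ((1 : ℝ) + ‖p‖ ^ 2) ^ (-δ / 2) ≤ 1 :=
      Real.rpow_le_one_of_one_le_of_nonpos (by nlinarith [sq_nonneg ‖p‖]) (by linarith)
    calc C * ((1 : ℝ) + ‖p‖ ^ 2) ^ (-δ / 2) ≤ C * 1 := mul_le_mul_of_nonneg_left h1 hC.le
      _ = C := mul_one C
  have hφt2_int : Integrable (fun p => φt p ^ 2) volume := by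
    refine ((hφt_int.abs.const_mul C)).mono' ((hcont.pow 2).aestronglyMeasurable)
      (ae_of_all _ fun p => ?_)
    rw [Real.norm_eq_abs, _root_.abs_pow, sq]
    exact mul_le_mul_of_nonneg_right (hφt_le p) (abs_nonneg _)
  have hφ2_ae : (fun p => φ p ^ 2) =ᵐ[volume] fun p => φt p ^ 2 :=
    hae.mono fun p hp => by simp only [hp]
  have hφ2_int : Integrable (fun p => φ p ^ 2) volume := hφt2_int.congr hφ2_ae.symm
  have hfC2_int : Integrable (fun x => ((φ x ^ 2 : ℝ) : ℂ)) volume := hφ2_int.ofReal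
  -- the continuous representatives of the Fourier transforms
  set F : ℝ × ℝ → ℂ := FT2 (fun x => (φ x : ℂ)) with hF
  set S : ℝ × ℝ → ℂ := FT2 (fun x => ((φ x ^ 2 : ℝ) : ℂ)) with hS
  have hFcont : Continuous F := FT2_continuous hfC_int
  have hScont : Continuous S := FT2_continuous hfC2_int
  -- Φ agrees a.e. with the continuous function F
  have hΦF : Φ =ᵐ[volume] F := by
    apply ae_eq_of_integral_contDiff_smul_eq (hΦ2.locallyIntegrable one_le_two)
      hFcont.locallyIntegrable
    intro g gdiff gsupp
    set ψ := toSchwartz g gdiff gsupp with hψdef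
    have h1 := hPar ψ
    have h2 := FT2_mult hfC_int ψ.integrable
    have e1 : ∫ x, g x • Φ x = ∫ ξ, Φ ξ * ψ ξ := by
      congr 1; funext x
      simp [hψdef, Complex.real_smul, mul_comm]
    have e2 : ∫ x, g x • F x = ∫ ξ, F ξ * ψ ξ := by
      congr 1; funext x
      simp [hψdef, Complex.real_smul, mul_comm]
    rw [e1, e2, h1, ← h2]
  -- the open set where the symbol is finite
  set U : Set (ℝ × ℝ) := {ξ | ξ.1 ≠ 0} with hU
  have hUopen : IsOpen U := isOpen_compl_singleton.preimage continuous_fst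
  set m : ℝ × ℝ → ℝ := fun ξ => 1 + |ξ.1| ^ α + ξ.2 ^ 2 / ξ.1 ^ 2 with hm
  have hmpos : ∀ ξ : ℝ × ℝ, 0 < m ξ := by
    intro ξ
    have h1 : (0 : ℝ) ≤ |ξ.1| ^ α := Real.rpow_nonneg (abs_nonneg _) α
    have h2 : (0 : ℝ) ≤ ξ.2 ^ 2 / ξ.1 ^ 2 := div_nonneg (sq_nonneg _) (sq_nonneg _)
    simp only [hm]; linarith
  set Gf : ℝ × ℝ → ℂ := fun ξ => (1 / 2 : ℂ) * S ξ / ((m ξ : ℝ) : ℂ) with hGf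
  -- a.e. equality on U
  have haeU : ∀ᵐ ξ : ℝ × ℝ ∂volume, ξ ∈ U → F ξ = Gf ξ := by
    filter_upwards [hEq, hΦF] with ξ h1 h2 hξU
    have hmC : ((m ξ : ℝ) : ℂ) ≠ 0 := by
      exact_mod_cast (hmpos ξ).ne'
    have h3 := h1 hξU
    rw [h2] at h3
    rw [hGf]
    rw [eq_div_iff hmC]
    rw [mul_comm] at h3
    exact h3
  -- continuity of Gf on U
  have hGcont : ContinuousOn Gf U := by
    apply ContinuousOn.div ((continuous_const.mul hScont).continuousOn)
    · intro ξ hξ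
      apply ContinuousAt.continuousWithinAt
      apply Complex.continuous_ofReal.continuousAt.comp
      have hξ1 : ξ.1 ≠ 0 := hξ
      have c1 : ContinuousAt (fun η : ℝ × ℝ => |η.1| ^ α) ξ := by
        have hf : ContinuousAt (fun η : ℝ × ℝ => |η.1|) ξ :=
          (_root_.continuous_abs.comp continuous_fst).continuousAt
        have := ContinuousAt.comp (x := ξ) (Real.continuousAt_rpow_const |ξ.1| α
          (Or.inl (abs_ne_zero.mpr hξ1))) hf
        exact this
      have c2 : ContinuousAt (fun η : ℝ × ℝ => η.2 ^ 2 / η.1 ^ 2) ξ := by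
        apply ContinuousAt.div
        · exact ((continuous_snd.pow 2)).continuousAt
        · exact ((continuous_fst.pow 2)).continuousAt
        · exact pow_ne_zero 2 hξ1
      exact (continuousAt_const.add c1).add c2
    · intro ξ hξ
      exact_mod_cast (hmpos ξ).ne'
  -- hence equality everywhere on U
  have hEqOn : Set.EqOn F Gf U :=
    MeasureTheory.Measure.eqOn_of_ae_eq ((ae_restrict_iff' hUopen.measurableSet).mpr haeU)
      hFcont.continuousOn hGcont (by rw [hUopen.interior_eq]; exact subset_closure)
  -- two sequences approaching the origin inside U
  set t : ℕ → ℝ := fun n => ((n : ℝ) + 1)⁻¹ with ht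
  have htpos : ∀ n, 0 < t n := fun n => by positivity
  have ht0 : Tendsto t atTop (𝓝 0) := by
    simpa [ht, one_div] using tendsto_one_div_add_atTop_nhds_zero_nat (𝕜 := ℝ)
  -- first path: along the ξ₁ axis
  have hF0 : F (0, 0) = 1 / 2 * S (0, 0) / 1 := by
    have hx : Tendsto (fun n => ((t n, 0) : ℝ × ℝ)) atTop (𝓝 ((0 : ℝ), (0 : ℝ))) :=
      ht0.prodMk_nhds tendsto_const_nhds
    have hF1 : Tendsto (fun n => F (t n, 0)) atTop (𝓝 (F (0, 0))) :=
      (hFcont.tendsto _).comp hx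
    have hS1 : Tendsto (fun n => S (t n, 0)) atTop (𝓝 (S (0, 0))) :=
      (hScont.tendsto _).comp hx
    have hrt : Tendsto (fun n => t n ^ α) atTop (𝓝 0) := by
      have hc := ((Real.continuousAt_rpow_const 0 α (Or.inr hα0.le)).tendsto).comp ht0
      simpa [Function.comp_def, Real.zero_rpow hα0.ne'] using hc
    have hmeq : ∀ n, m ((t n, 0) : ℝ × ℝ) = 1 + t n ^ α := by
      intro n
      simp [hm, abs_of_pos (htpos n), zero_pow, zero_div]
    have hm1 : Tendsto (fun n => m ((t n, 0) : ℝ × ℝ)) atTop (𝓝 1) := by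
      have h := (tendsto_const_nhds (x := (1 : ℝ)) (f := atTop (α := ℕ))).add hrt
      rw [add_zero] at h
      simpa [hmeq] using h
    have hmc : Tendsto (fun n => ((m ((t n, 0) : ℝ × ℝ) : ℝ) : ℂ)) atTop (𝓝 1) := by
      have := (Complex.continuous_ofReal.tendsto 1).comp hm1
      simpa [Function.comp_def] using this
    have hGf1 : Tendsto (fun n => Gf (t n, 0)) atTop (𝓝 (1 / 2 * S (0, 0) / 1)) := by
      exact ((tendsto_const_nhds.mul hS1).div hmc one_ne_zero)
    have heq : (fun n => F (t n, 0)) = fun n => Gf (t n, 0) :=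
      funext fun n => hEqOn (show ((t n, 0) : ℝ × ℝ) ∈ U from (htpos n).ne')
    rw [heq] at hF1
    exact tendsto_nhds_unique hF1 hGf1
  -- second path: along a parabola, forcing the limit to vanish
  have hF0' : F (0, 0) = 0 := by
    set y : ℕ → ℝ × ℝ := fun n => ((t n) ^ 2, t n) with hy
    have hymem : ∀ n, y n ∈ U := fun n => pow_ne_zero 2 (htpos n).ne'
    have hytend : Tendsto y atTop (𝓝 ((0 : ℝ), (0 : ℝ))) := by
      refine Tendsto.prodMk_nhds ?_ ht0
      have := (ht0.pow 2)
      simpa using this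
    have hF2 : Tendsto (fun n => F (y n)) atTop (𝓝 (F (0, 0))) :=
      (hFcont.tendsto _).comp hytend
    have hS2 : Tendsto (fun n => S (y n)) atTop (𝓝 (S (0, 0))) :=
      (hScont.tendsto _).comp hytend
    have hkey : ∀ n : ℕ, ((n : ℝ) + 1) ≤ m (y n) := by
      intro n
      have h1 : (0 : ℝ) ≤ |(y n).1| ^ α := Real.rpow_nonneg (abs_nonneg _) α
      have h2 : (y n).2 ^ 2 / (y n).1 ^ 2 = ((n : ℝ) + 1) ^ 2 := by
        have hne : ((n : ℝ) + 1) ≠ 0 := by positivity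
        simp only [hy, ht]
        field_simp
      have h3 : ((n : ℝ) + 1) ≤ ((n : ℝ) + 1) ^ 2 := by nlinarith [Nat.cast_nonneg (α := ℝ) n]
      simp only [hm]
      rw [h2]
      linarith
    have hmy : Tendsto (fun n => m (y n)) atTop atTop :=
      tendsto_atTop_mono hkey (tendsto_atTop_add_const_right atTop 1 tendsto_natCast_atTop_atTop)
    have hinv : Tendsto (fun n => (m (y n))⁻¹) atTop (𝓝 0) := hmy.inv_tendsto_atTop
    have hinvC : Tendsto (fun n => (((m (y n))⁻¹ : ℝ) : ℂ)) atTop (𝓝 0) := by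
      have := (Complex.continuous_ofReal.tendsto 0).comp hinv
      simpa [Function.comp_def] using this
    have hGfy : Tendsto (fun n => Gf (y n)) atTop (𝓝 0) := by
      have heq2 : (fun n => Gf (y n)) = fun n => 1 / 2 * S (y n) * (((m (y n))⁻¹ : ℝ) : ℂ) := by
        funext n
        simp only [hGf]
        rw [div_eq_mul_inv, Complex.ofReal_inv]
      rw [heq2]
      have h := (tendsto_const_nhds (x := (1 / 2 : ℂ)) (f := atTop (α := ℕ)).mul hS2).mul hinvC
      simpa using h
    have heq : (fun n => F (y n)) = fun n => Gf (y n) := funext fun n => hEqOn (hymem n)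
    rw [heq] at hF2
    exact tendsto_nhds_unique hF2 hGfy
  -- conclude: S (0,0) = 0, i.e. ∫ φ² = 0
  have hS00 : S (0, 0) = 0 := by
    have : (1 / 2 : ℂ) * S (0, 0) / 1 = 0 := by rw [← hF0, hF0']
    rw [div_one] at this
    have h2 : (1 / 2 : ℂ) ≠ 0 := by norm_num
    exact (mul_eq_zero.mp this).resolve_left h2
  have hS0int : S (0, 0) = ((∫ x : ℝ × ℝ, φ x ^ 2 : ℝ) : ℂ) := by
    have hker : ∀ x : ℝ × ℝ,
        Complex.exp (-(2 * Real.pi * Complex.I) * ((x.1 * (0 : ℝ) + x.2 * (0 : ℝ) : ℝ) : ℂ))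
          * ((φ x ^ 2 : ℝ) : ℂ) = ((φ x ^ 2 : ℝ) : ℂ) := fun x => by norm_num
    calc S (0, 0) = ∫ x : ℝ × ℝ, ((φ x ^ 2 : ℝ) : ℂ) := by
          rw [hS]; unfold FT2; exact integral_congr_ae (ae_of_all _ hker)
      _ = ((∫ x : ℝ × ℝ, φ x ^ 2 : ℝ) : ℂ) := integral_ofReal
  have hint0 : ∫ x : ℝ × ℝ, φ x ^ 2 = 0 := by
    have := hS0int.symm.trans hS00
    exact_mod_cast this
  have hsq0 : (fun p => φ p ^ 2) =ᵐ[volume] 0 :=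
    (integral_eq_zero_iff_of_nonneg (fun p => sq_nonneg (φ p)) hφ2_int).mp hint0
  filter_upwards [hsq0] with p hp
  have hp2 : φ p ^ 2 = 0 := by simpa using hp
  exact pow_eq_zero_iff two_ne_zero |>.mp hp2
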